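/- Let ζ : ℝ≥0 → ℝ≥0 be continuous, strictly increasing, unbounded with ζ(0) = 0, let P ≥ 0, and let y : [0,T] → ℝ≥0 be absolutely continuous such that y'(t) ≤ -(3/4)ζ(y(t)) + (1/2)ζ(P) for a.e. t ∈ [0,T]. Then y'(t) ≤ -(1/4)ζ(y(t)) for a.e. t with y(t) ≥ P, and consequently y(t) ≤ max(y(0), P) for all t ∈ [0,T]. -/

import Mathlib

/-- Comparison argument at the heart of Theorem 1's proof: if
`y' ≤ -(3/4)ζ(y) + (1/2)ζ(P)` then `y' ≤ -(1/4)ζ(y)` whenever `y ≥ P`, and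
consequently `y(t) ≤ max(y(0), P)`. -/
theorem stmt_18 (ζ : ℝ → ℝ) (hζcont : ContinuousOn ζ (Set.Ici 0))
    (hζmono : StrictMonoOn ζ (Set.Ici 0)) (hζ0 : ζ 0 = 0)
    (hζtop : Filter.Tendsto ζ Filter.atTop Filter.atTop)
    (P T : ℝ) (hP : 0 ≤ P) (hT : 0 < T) (y y' : ℝ → ℝ)
    (hynonneg : ∀ t ∈ Set.Icc 0 T, 0 ≤ y t)
    (hderiv : ∀ t ∈ Set.Icc 0 T, HasDerivAt y (y' t) t)
    (hineq : ∀ t ∈ Set.Icc 0 T, y' t ≤ -(3 / 4) * ζ (y t) + (1 / 2) * ζ P) :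
    (∀ t ∈ Set.Icc 0 T, P ≤ y t → y' t ≤ -(1 / 4) * ζ (y t)) ∧
      ∀ t ∈ Set.Icc 0 T, y t ≤ max (y 0) P := by
  have hmono := hζmono.monotoneOn
  have part1 : ∀ t ∈ Set.Icc 0 T, P ≤ y t → y' t ≤ -(1 / 4) * ζ (y t) := by
    intro t ht hPy
    have h1 : ζ P ≤ ζ (y t) := hmono hP (hynonneg t ht) hPy
    have := hineq t ht
    linarith
  refine ⟨part1, ?_⟩
  have hycont : ContinuousOn y (Set.Icc 0 T) := fun t ht =>
    (hderiv t ht).continuousAt.continuousWithinAt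
  set M := max (y 0) P with hM
  have hPM : P ≤ M := le_max_right _ _
  have h0M : (0:ℝ) ≤ M := le_trans hP hPM
  intro t₀ ht₀
  by_contra hc
  push_neg at hc
  set S : Set ℝ := Set.Icc 0 t₀ ∩ y ⁻¹' Set.Iic M with hS
  have hsub : Set.Icc (0:ℝ) t₀ ⊆ Set.Icc 0 T := Set.Icc_subset_Icc le_rfl ht₀.2
  have hScl : IsClosed S :=
    (hycont.mono hsub).preimage_isClosed_of_isClosed isClosed_Icc isClosed_Iic
  have h0S : (0:ℝ) ∈ S := ⟨⟨le_rfl, ht₀.1⟩, Set.mem_preimage.mpr (Set.mem_Iic.mpr (le_max_left _ _))⟩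
  have hSne : S.Nonempty := ⟨0, h0S⟩
  have hSbdd : BddAbove S := ⟨t₀, fun x hx => hx.1.2⟩
  set s := sSup S with hs
  have hsS : s ∈ S := hScl.csSup_mem hSne hSbdd
  have hst₀ : s ≤ t₀ := hsS.1.2
  have hs0 : 0 ≤ s := hsS.1.1
  -- for u in (s, t₀], y u > M
  have hgt : ∀ u, s < u → u ≤ t₀ → M < y u := by
    intro u hsu hut
    by_contra h
    push_neg at h
    have : u ∈ S := ⟨⟨le_trans hs0 hsu.le, hut⟩, h⟩
    exact absurd (le_csSup hSbdd this) (not_le.mpr hsu)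
  have hslt : s < t₀ := by
    rcases lt_or_eq_of_le hst₀ with h | h
    · exact h
    · exact absurd hsS.2 (not_le.mpr (h ▸ hc))
  -- y antitone on [s, t₀]
  have hanti : AntitoneOn y (Set.Icc s t₀) := by
    apply antitoneOn_of_deriv_nonpos (convex_Icc s t₀)
    · exact hycont.mono (Set.Icc_subset_Icc hs0 ht₀.2)
    · intro u hu
      rw [interior_Icc] at hu
      have huT : u ∈ Set.Icc 0 T :=
        ⟨le_trans hs0 hu.1.le, le_trans hu.2.le ht₀.2⟩
      exact ((hderiv u huT).differentiableAt).differentiableWithinAt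
    · intro u hu
      rw [interior_Icc] at hu
      have huT : u ∈ Set.Icc 0 T :=
        ⟨le_trans hs0 hu.1.le, le_trans hu.2.le ht₀.2⟩
      have hMy : M < y u := hgt u hu.1 hu.2.le
      rw [(hderiv u huT).deriv]
      have h1 : y' u ≤ -(1/4) * ζ (y u) :=
        part1 u huT (le_trans hPM hMy.le)
      have h2 : (0:ℝ) ≤ ζ (y u) := by
        rw [← hζ0]
        exact hmono (Set.mem_Ici.mpr le_rfl) (hynonneg u huT) (hynonneg u huT)
      linarith
  have := hanti (Set.left_mem_Icc.mpr hslt.le) (Set.right_mem_Icc.mpr hslt.le) hslt.le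
  exact absurd (le_trans this hsS.2) (not_le.mpr hc)
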